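/- Let K_Y be a symmetric positive semidefinite d×d matrix, let r ≤ d, fix λ > 0, and define f(x) = (λ/2)·ln( max{x, λ/2} / (λ/2) ) − max{x, λ/2} for x ≥ 0. Then the minimum of Σ_{i=1}^r f(Λ_i) over all U ∈ ℝ^{d×r} with UᵀU = I_r and UᵀK_Y U = diag(Λ_1, …, Λ_r) equals Σ_{i=1}^r f(λ_i(K_Y)), where λ_1(K_Y) ≥ … ≥ λ_r(K_Y) are the top r eigenvalues of K_Y; the minimum is attained when the columns of U are the top r eigenvectors of K_Y. -/

import Mathlib

open MeasureTheory ProbabilityTheory Matrix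
open scoped ENNReal NNReal Classical

noncomputable section

abbrev Evec (d : ℕ) := EuclideanSpace ℝ (Fin d)

/-- Couplings: joint measures with prescribed marginals. -/
def IsCoupling {E F : Type*} [MeasurableSpace E] [MeasurableSpace F]
    (π : Measure (E × F)) (P : Measure E) (Q : Measure F) : Prop :=
  π.fst = P ∧ π.snd = Q

/-- KL divergence valued in `ℝ≥0∞` (junk value `⊤` when not absolutely continuous
or not integrable). -/
def klDivNN {E : Type*} [MeasurableSpace E] (μ ν : Measure E) : ℝ≥0∞ :=
  if μ ≪ ν ∧ Integrable (fun x => Real.log (μ.rnDeriv ν x).toReal) μ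
  then ENNReal.ofReal (∫ x, Real.log (μ.rnDeriv ν x).toReal ∂μ)
  else ⊤

/-- Mutual information of a joint measure. -/
def mutInfo {E F : Type*} [MeasurableSpace E] [MeasurableSpace F]
    (π : Measure (E × F)) : ℝ≥0∞ :=
  if h : SFinite π.snd then klDivNN π (haveI := h; π.fst.prod π.snd) else ⊤

/-- Entropy-regularized squared 2-Wasserstein distance. -/
def entW2 {d : ℕ} (lam : ℝ) (P Q : Measure (Evec d)) : ℝ :=
  sInf {c : ℝ | ∃ π : Measure (Evec d × Evec d), IsCoupling π P Q ∧ mutInfo π ≠ ⊤ ∧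
    Integrable (fun p => ‖p.1 - p.2‖ ^ 2) π ∧
    c = ∫ p, ‖p.1 - p.2‖ ^ 2 ∂π + lam * (mutInfo π).toReal}

/-- Sinkhorn divergence. -/
def sinkhornDiv {d : ℕ} (lam : ℝ) (P Q : Measure (Evec d)) : ℝ :=
  entW2 lam P Q - (entW2 lam P P + entW2 lam Q Q) / 2

/-- Standard Gaussian on `ℝ^r`. -/
def stdGaussian (r : ℕ) : Measure (Evec r) :=
  Measure.map (⇑(EuclideanSpace.equiv (Fin r) ℝ).symm)
    (Measure.pi fun _ : Fin r => gaussianReal 0 1)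

/-- The map `x ↦ G x` of a matrix acting on Euclidean space. -/
def matVecMap {d r : ℕ} (G : Matrix (Fin d) (Fin r) ℝ) : Evec r → Evec d :=
  fun x => (EuclideanSpace.equiv (Fin d) ℝ).symm (G.mulVec (EuclideanSpace.equiv (Fin r) ℝ x))

/-- The positive semidefinite square root of a positive semidefinite matrix
(the definition `Matrix.PosSemidef.sqrt` of the older Mathlib, removed since). -/
def Matrix.PosSemidef.sqrt {n 𝕜 : Type*} [Fintype n] [DecidableEq n] [RCLike 𝕜] [PartialOrder 𝕜]
    {A : Matrix n n 𝕜} (hA : A.PosSemidef) : Matrix n n 𝕜 :=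
  (hA.1.eigenvectorUnitary : Matrix n n 𝕜) *
    diagonal (fun i => ((Real.sqrt (hA.1.eigenvalues i) : ℝ) : 𝕜)) *
    (star hA.1.eigenvectorUnitary : Matrix n n 𝕜)

/-- Centered Gaussian measure with covariance `K`. -/
def gaussianOfCov {d : ℕ} (K : Matrix (Fin d) (Fin d) ℝ) (hK : K.PosSemidef) :
    Measure (Evec d) :=
  Measure.map (matVecMap hK.sqrt) (stdGaussian d)

/-- Covariance matrix of a measure on `ℝ^d`. -/
def covMatrix {d : ℕ} (μ : Measure (Evec d)) : Matrix (Fin d) (Fin d) ℝ :=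
  Matrix.of fun i j => ∫ x, (x i - ∫ y, y i ∂μ) * (x j - ∫ y, y j ∂μ) ∂μ

/-- The sub-gaussian condition with parameter `s` for a measure on `ℝ^d`. -/
def IsSubG {d : ℕ} (μ : Measure (Evec d)) (s : ℝ) : Prop :=
  ∫ x, Real.exp (‖x‖ ^ 2 / (2 * d * s)) ∂μ ≤ 2

/-- The sub-gaussian parameter `σ²(X)` of a measure on `ℝ^d`. -/
def subgParam {d : ℕ} (μ : Measure (Evec d)) : ℝ :=
  sInf {s : ℝ | 0 < s ∧ IsSubG μ s}

/-- Empirical measure of a sample. -/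
def empMeasure {d : ℕ} (n : ℕ) (y : Fin n → Evec d) : Measure (Evec d) :=
  (n : ℝ≥0∞)⁻¹ • ∑ i : Fin n, Measure.dirac (y i)

/-- `u` is an orthonormal eigenbasis of `K` with eigenvalues `μ` in decreasing order. -/
def IsEigenDecomp {d : ℕ} (K : Matrix (Fin d) (Fin d) ℝ)
    (u : Fin d → Evec d) (μ : Fin d → ℝ) : Prop :=
  Orthonormal ℝ u ∧ Antitone μ ∧ ∀ i, matVecMap K (u i) = μ i • u i


namespace OptFrameAux

lemma f_anti (lam : ℝ) (hlam : 0 < lam) :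
    Antitone (fun x : ℝ => lam / 2 * Real.log (max x (lam / 2) / (lam / 2)) - max x (lam / 2)) := by
  intro a b hab
  have hh0 : 0 < lam / 2 := by positivity
  set h : ℝ := lam / 2 with hh
  set A := max a h with hA'
  set B := max b h with hB'
  have hA : h ≤ A := le_max_right _ _
  have hAB : A ≤ B := max_le_max hab le_rfl
  have hA0 : 0 < A := lt_of_lt_of_le hh0 hA
  have hB0 : 0 < B := lt_of_lt_of_le hA0 hAB
  have h1 : A * (Real.log B - Real.log A) ≤ B - A := by
    have h2 := Real.log_le_sub_one_of_pos (show 0 < B / A by positivity)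
    rw [Real.log_div hB0.ne' hA0.ne'] at h2
    have h3 := mul_le_mul_of_nonneg_left h2 hA0.le
    calc A * (Real.log B - Real.log A) ≤ A * (B / A - 1) := h3
      _ = B - A := by field_simp
  have hlogAB : 0 ≤ Real.log B - Real.log A := by
    have := Real.log_le_log hA0 hAB
    linarith
  have key : h * (Real.log B - Real.log A) ≤ B - A :=
    le_trans (mul_le_mul_of_nonneg_right hA hlogAB) h1
  show h * Real.log (B / h) - B ≤ h * Real.log (A / h) - A
  rw [Real.log_div hB0.ne' hh0.ne', Real.log_div hA0.ne' hh0.ne']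
  nlinarith [key]

variable {d r : ℕ}

lemma mulVec_sum' {ι : Type*} [Fintype ι] (K : Matrix (Fin d) (Fin d) ℝ)
    (w : ι → (Fin d → ℝ)) (x : ι → ℝ) :
    K.mulVec (∑ b, x b • w b) = ∑ b, x b • K.mulVec (w b) := by
  have : K.mulVec (∑ b, x b • w b) = K.mulVecLin (∑ b, x b • w b) := rfl
  rw [this, map_sum]
  simp [Matrix.mulVecLin_apply]

lemma sum_dot {ι : Type*} [Fintype ι] (w : ι → (Fin d → ℝ)) (x : ι → ℝ) (y : Fin d → ℝ) :
    (∑ a, x a • w a) ⬝ᵥ y = ∑ a, x a * (w a ⬝ᵥ y) := by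
  simp only [dotProduct, Finset.sum_apply, Pi.smul_apply, smul_eq_mul, Finset.sum_mul,
    Finset.mul_sum]
  rw [Finset.sum_comm]
  exact Finset.sum_congr rfl fun a _ => Finset.sum_congr rfl fun l _ => by ring

lemma dot_sum {ι : Type*} [Fintype ι] (v : Fin d → ℝ) (w : ι → (Fin d → ℝ)) (x : ι → ℝ) :
    v ⬝ᵥ (∑ b, x b • w b) = ∑ b, x b * (v ⬝ᵥ w b) := by
  simp only [dotProduct, Finset.sum_apply, Pi.smul_apply, smul_eq_mul, Finset.mul_sum]
  rw [Finset.sum_comm]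
  exact Finset.sum_congr rfl fun a _ => Finset.sum_congr rfl fun l _ => by ring

lemma quad_eval {ι : Type*} [Fintype ι] (K : Matrix (Fin d) (Fin d) ℝ)
    (w : ι → (Fin d → ℝ)) (x : ι → ℝ) :
    (∑ a, x a • w a) ⬝ᵥ K.mulVec (∑ b, x b • w b)
      = ∑ a, ∑ b, x a * x b * (w a ⬝ᵥ K.mulVec (w b)) := by
  rw [mulVec_sum', dot_sum]
  simp only [sum_dot, Finset.mul_sum]
  rw [Finset.sum_comm]
  exact Finset.sum_congr rfl fun a _ => Finset.sum_congr rfl fun b _ => by ring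

lemma dot_eval {ι : Type*} [Fintype ι] (w : ι → (Fin d → ℝ)) (x : ι → ℝ) :
    (∑ a, x a • w a) ⬝ᵥ (∑ b, x b • w b)
      = ∑ a, ∑ b, x a * x b * (w a ⬝ᵥ w b) := by
  have := quad_eval (1 : Matrix (Fin d) (Fin d) ℝ) w x
  simpa [Matrix.one_mulVec] using this

lemma entry_eq (U : Matrix (Fin d) (Fin r) ℝ) (K : Matrix (Fin d) (Fin d) ℝ) (a b : Fin r) :
    (fun l => U l a) ⬝ᵥ K.mulVec (fun l => U l b) = (Uᵀ * K * U) a b := by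
  simp only [Matrix.mul_apply, Matrix.transpose_apply, Matrix.mulVec, dotProduct]
  simp only [Finset.mul_sum, Finset.sum_mul]
  rw [Finset.sum_comm]
  refine Finset.sum_congr rfl fun l _ => ?_
  refine Finset.sum_congr rfl fun m _ => ?_
  ring

lemma entry_eq' (U : Matrix (Fin d) (Fin r) ℝ) (a b : Fin r) :
    (fun l => U l a) ⬝ᵥ (fun l => U l b) = (Uᵀ * U) a b := by
  simp [Matrix.mul_apply, Matrix.transpose_apply, dotProduct]



lemma interlace (hr : r ≤ d) (K : Matrix (Fin d) (Fin d) ℝ)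
    (u : Fin d → (Fin d → ℝ)) (μ : Fin d → ℝ)
    (hu : ∀ a b, u a ⬝ᵥ u b = if a = b then (1:ℝ) else 0)
    (hμ : Antitone μ) (heig : ∀ j, K.mulVec (u j) = μ j • u j)
    (U : Matrix (Fin d) (Fin r) ℝ) (Λ : Fin r → ℝ)
    (hU : Uᵀ * U = 1) (hdiag : Uᵀ * K * U = Matrix.diagonal Λ)
    (σ : Equiv.Perm (Fin r)) (hσ : Antitone (Λ ∘ σ)) (i : Fin r) :
    Λ (σ i) ≤ μ (Fin.castLE hr i) := by
  classical
  set i' : Fin d := Fin.castLE hr i with hi'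
  set w : Fin r → (Fin d → ℝ) := fun j l => U l j with hw
  have hww : ∀ a b, w a ⬝ᵥ w b = if a = b then (1:ℝ) else 0 := by
    intro a b
    rw [show w a ⬝ᵥ w b = (Uᵀ * U) a b from entry_eq' U a b, hU, Matrix.one_apply]
  have hwKw : ∀ a b, w a ⬝ᵥ K.mulVec (w b) = if a = b then Λ b else 0 := by
    intro a b
    rw [show w a ⬝ᵥ K.mulVec (w b) = (Uᵀ * K * U) a b from entry_eq U K a b, hdiag]
    by_cases h : a = b
    · subst h; simp
    · simp [Matrix.diagonal_apply_ne _ h, h]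
  have huKu : ∀ a b, u a ⬝ᵥ K.mulVec (u b) = if a = b then μ b else 0 := by
    intro a b
    rw [heig b, dotProduct_smul, hu]
    by_cases h : a = b <;> simp [h]
  -- linear maps
  let T : (↥(Set.Iic i) → ℝ) →ₗ[ℝ] (Fin d → ℝ) :=
    { toFun := fun x => ∑ j, x j • w (σ j)
      map_add' := by intro x y; simp [add_smul, Finset.sum_add_distrib]
      map_smul' := by intro c x; simp [Finset.smul_sum, smul_smul] }
  let S : (↥(Set.Ici i') → ℝ) →ₗ[ℝ] (Fin d → ℝ) :=
    { toFun := fun c => ∑ j, c j • u j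
      map_add' := by intro x y; simp [add_smul, Finset.sum_add_distrib]
      map_smul' := by intro c x; simp [Finset.smul_sum, smul_smul] }
  have hTapp : ∀ x, T x = ∑ j, x j • w (σ j) := fun _ => rfl
  have hSapp : ∀ c, S c = ∑ j, c j • u j := fun _ => rfl
  have hTinj : Function.Injective T := by
    rw [← LinearMap.ker_eq_bot, LinearMap.ker_eq_bot']
    intro x hx
    funext j0
    have h0 : w (σ j0) ⬝ᵥ T x = x j0 := by
      rw [hTapp, dot_sum]
      simp only [hww, σ.injective.eq_iff, Subtype.coe_inj, mul_ite, mul_one, mul_zero]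
      simp
    rw [hx] at h0
    simpa using h0.symm
  have hSinj : Function.Injective S := by
    rw [← LinearMap.ker_eq_bot, LinearMap.ker_eq_bot']
    intro c hc
    funext j0
    have h0 : u j0 ⬝ᵥ S c = c j0 := by
      rw [hSapp, dot_sum]
      simp only [hu, Subtype.coe_inj, mul_ite, mul_one, mul_zero]
      simp
    rw [hc] at h0
    simpa using h0.symm
  have hTrank : Module.finrank ℝ (LinearMap.range T) = i.val + 1 := by
    rw [LinearMap.finrank_range_of_inj hTinj, Module.finrank_fintype_fun_eq_card,
      Fintype.card_Iic, Fin.card_Iic]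
  have hSrank : Module.finrank ℝ (LinearMap.range S) = d - i.val := by
    rw [LinearMap.finrank_range_of_inj hSinj, Module.finrank_fintype_fun_eq_card,
      Fintype.card_Ici, Fin.card_Ici]
    rfl
  have hdim : Module.finrank ℝ (Fin d → ℝ) = d := by
    simp [Module.finrank_fintype_fun_eq_card]
  have hsum := Submodule.finrank_sup_add_finrank_inf_eq (LinearMap.range T) (LinearMap.range S)
  have hsup := Submodule.finrank_le (LinearMap.range T ⊔ LinearMap.range S)
  rw [hdim] at hsup
  have hid : i.val < d := i'.isLt
  have hpos : 0 < Module.finrank ℝ ↥(LinearMap.range T ⊓ LinearMap.range S) := by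
    omega
  obtain ⟨v, hvmem, hv0⟩ := Submodule.exists_mem_ne_zero_of_ne_bot
    (p := LinearMap.range T ⊓ LinearMap.range S)
    (by intro h; rw [h, finrank_bot] at hpos; omega)
  obtain ⟨x, hx⟩ := hvmem.1
  obtain ⟨c, hc⟩ := hvmem.2
  -- quadratic form evaluations
  have hQ1 : v ⬝ᵥ K.mulVec v = ∑ j : ↥(Set.Iic i), Λ (σ j) * (x j) ^ 2 := by
    rw [← hx, hTapp, quad_eval]
    refine Finset.sum_congr rfl fun a _ => ?_
    simp only [hwKw, σ.injective.eq_iff, Subtype.coe_inj, mul_ite, mul_zero]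
    rw [Finset.sum_ite_eq Finset.univ a]
    simp [pow_two]; ring
  have hN1 : v ⬝ᵥ v = ∑ j : ↥(Set.Iic i), (x j) ^ 2 := by
    rw [← hx, hTapp, dot_eval]
    refine Finset.sum_congr rfl fun a _ => ?_
    simp only [hww, σ.injective.eq_iff, Subtype.coe_inj, mul_ite, mul_one, mul_zero]
    rw [Finset.sum_ite_eq Finset.univ a]
    simp [pow_two]
  have hQ2 : v ⬝ᵥ K.mulVec v = ∑ j : ↥(Set.Ici i'), μ j * (c j) ^ 2 := by
    rw [← hc, hSapp, quad_eval]
    refine Finset.sum_congr rfl fun a _ => ?_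
    simp only [huKu, Subtype.coe_inj, mul_ite, mul_zero]
    rw [Finset.sum_ite_eq Finset.univ a]
    simp [pow_two]; ring
  have hN2 : v ⬝ᵥ v = ∑ j : ↥(Set.Ici i'), (c j) ^ 2 := by
    rw [← hc, hSapp, dot_eval]
    refine Finset.sum_congr rfl fun a _ => ?_
    simp only [hu, Subtype.coe_inj, mul_ite, mul_one, mul_zero]
    rw [Finset.sum_ite_eq Finset.univ a]
    simp [pow_two]
  have hb1 : Λ (σ i) * (v ⬝ᵥ v) ≤ v ⬝ᵥ K.mulVec v := by
    rw [hQ1, hN1, Finset.mul_sum]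
    refine Finset.sum_le_sum fun j _ => ?_
    exact mul_le_mul_of_nonneg_right (hσ j.2) (sq_nonneg _)
  have hb2 : v ⬝ᵥ K.mulVec v ≤ μ i' * (v ⬝ᵥ v) := by
    rw [hQ2, hN2, Finset.mul_sum]
    refine Finset.sum_le_sum fun j _ => ?_
    exact mul_le_mul_of_nonneg_right (hμ j.2) (sq_nonneg _)
  have hvv : 0 < v ⬝ᵥ v := by
    have h0 : v ⬝ᵥ v ≠ 0 := fun h => hv0 (dotProduct_self_eq_zero.mp h)
    have h1 : 0 ≤ v ⬝ᵥ v := by rw [hN1]; positivity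
    exact lt_of_le_of_ne h1 (Ne.symm h0)
  exact le_of_mul_le_mul_right (le_trans hb1 hb2) hvv


end OptFrameAux

/-- **Optimal frame for the reduced objective.**
For `f(x) = (λ/2)ln(max{x,λ/2}/(λ/2)) − max{x,λ/2}`, the minimum of `∑ᵢ f(Λᵢ)` over all
`U ∈ ℝ^{d×r}` with `UᵀU = I_r` and `UᵀK_YU = diag(Λ)` equals `∑ᵢ f(λᵢ(K_Y))` for the top `r`
eigenvalues of `K_Y`, attained when the columns of `U` are the top `r` eigenvectors. -/
theorem optimal_frame_top_eigenvectors
    (d r : ℕ) (hr : r ≤ d) (lam : ℝ) (hlam : 0 < lam)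
    (KY : Matrix (Fin d) (Fin d) ℝ) (hKY : KY.PosSemidef)
    (u : Fin d → Evec d) (μ : Fin d → ℝ) (heig : IsEigenDecomp KY u μ) :
    IsLeast {c : ℝ | ∃ (U : Matrix (Fin d) (Fin r) ℝ) (Λ : Fin r → ℝ),
        Uᵀ * U = 1 ∧ Uᵀ * KY * U = Matrix.diagonal Λ ∧
        c = ∑ i : Fin r, (lam / 2 * Real.log (max (Λ i) (lam / 2) / (lam / 2)) -
          max (Λ i) (lam / 2))}
      (∑ i : Fin r, (lam / 2 *
          Real.log (max (μ (Fin.castLE hr i)) (lam / 2) / (lam / 2)) -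
        max (μ (Fin.castLE hr i)) (lam / 2))) ∧
    ((Matrix.of fun i j => u (Fin.castLE hr j) i)ᵀ *
        (Matrix.of fun i j => u (Fin.castLE hr j) i) = 1 ∧
      (Matrix.of fun i j => u (Fin.castLE hr j) i)ᵀ * KY *
          (Matrix.of fun i j => u (Fin.castLE hr j) i) =
        Matrix.diagonal fun i => μ (Fin.castLE hr i)) := by
  classical
  obtain ⟨hortho, hμanti, heigv⟩ := heig
  have hfanti := OptFrameAux.f_anti lam hlam
  have hu : ∀ a b, (fun k => u a k) ⬝ᵥ (fun k => u b k) = if a = b then (1:ℝ) else 0 := by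
    intro a b
    have h := orthonormal_iff_ite.mp hortho a b
    rw [PiLp.inner_apply] at h
    simp only [RCLike.inner_apply, conj_trivial] at h
    simpa [dotProduct, mul_comm] using h
  have heigf : ∀ j, KY.mulVec (fun k => u j k) = μ j • (fun k => u j k) := by
    intro j
    funext k
    have h2 := congrArg (fun z : Evec d => z k) (heigv j)
    simp [matVecMap] at h2; exact h2
  set U0 : Matrix (Fin d) (Fin r) ℝ := Matrix.of fun i j => u (Fin.castLE hr j) i with hU0def
  have hU0 : U0ᵀ * U0 = 1 := by
    ext a b
    rw [← OptFrameAux.entry_eq' U0 a b]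
    show (fun k => u (Fin.castLE hr a) k) ⬝ᵥ (fun k => u (Fin.castLE hr b) k) = _
    rw [hu, Matrix.one_apply]
    simp [Fin.castLE_inj]
  have hdiag0 : U0ᵀ * KY * U0 = Matrix.diagonal (fun i => μ (Fin.castLE hr i)) := by
    ext a b
    rw [← OptFrameAux.entry_eq U0 KY a b]
    show (fun k => u (Fin.castLE hr a) k) ⬝ᵥ
      KY.mulVec (fun k => u (Fin.castLE hr b) k) = _
    rw [heigf, dotProduct_smul, hu]
    by_cases h : a = b
    · subst h; simp
    · have hne : Fin.castLE hr a ≠ Fin.castLE hr b := fun hh => h (Fin.castLE_injective hr hh)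
      simp [Matrix.diagonal_apply_ne _ h, hne]
  refine ⟨⟨⟨U0, fun i => μ (Fin.castLE hr i), hU0, hdiag0, rfl⟩, ?_⟩, hU0, hdiag0⟩
  rintro c ⟨U, Λ, hU, hdiag, rfl⟩
  set σ : Equiv.Perm (Fin r) := Tuple.sort (fun j => -Λ j) with hσdef
  have hσ : Antitone (Λ ∘ σ) := by
    intro a b hab
    have h := Tuple.monotone_sort (fun j => -Λ j) hab
    simpa using h
  have hint : ∀ i : Fin r, Λ (σ i) ≤ μ (Fin.castLE hr i) := fun i =>
    OptFrameAux.interlace hr KY (fun j k => u j k) μ hu hμanti heigf U Λ hU hdiag σ hσ i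
  calc ∑ i : Fin r, (lam / 2 * Real.log (max (μ (Fin.castLE hr i)) (lam / 2) / (lam / 2)) -
          max (μ (Fin.castLE hr i)) (lam / 2))
      ≤ ∑ i : Fin r, (lam / 2 * Real.log (max (Λ (σ i)) (lam / 2) / (lam / 2)) -
          max (Λ (σ i)) (lam / 2)) :=
        Finset.sum_le_sum fun i _ => hfanti (hint i)
    _ = ∑ i : Fin r, (lam / 2 * Real.log (max (Λ i) (lam / 2) / (lam / 2)) -
          max (Λ i) (lam / 2)) :=
        Equiv.sum_comp σ (fun j => lam / 2 * Real.log (max (Λ j) (lam / 2) / (lam / 2)) -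
          max (Λ j) (lam / 2))

end
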